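/- Under the hypotheses of the previous statement (ȧ = K(t)b, ḃ = −a, −K₁ ≤ K(t) ≤ −K₀ < 0, ζ = 1/K₁, γ = √K₀/3, ν = γ(1 + ζK₀)), if Θ(t) ≤ −γ for all t ≥ 0, then R(t) ≥ e^{2νt}R(0) for all t ≥ 0. -/

import Mathlib

open Set

/-- exponential growth of `R = ζa² + b²` inside the unstable cone:
if `Θ(t) ≤ -γ` for all `t ≥ 0`, then `R(t) ≥ e^{2νt} R(0)` where `ν = γ(1 + ζK₀)`,
`ζ = 1/K₁`, `γ = √K₀/3`. -/
theorem stmt11 (K₀ K₁ : ℝ) (hK₀ : 0 < K₀) (hK₀₁ : K₀ ≤ K₁)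
    (Kc a b : ℝ → ℝ) (hKcont : Continuous Kc)
    (hKbound : ∀ t : ℝ, 0 ≤ t → -K₁ ≤ Kc t ∧ Kc t ≤ -K₀)
    (ha : ∀ t : ℝ, 0 ≤ t → HasDerivAt a (Kc t * b t) t)
    (hb : ∀ t : ℝ, 0 ≤ t → HasDerivAt b (-(a t)) t)
    (hnz : ∀ t : ℝ, 0 ≤ t → (a t, b t) ≠ (0, 0))
    (hcone : ∀ t : ℝ, 0 ≤ t →
      a t * b t / ((1 / K₁) * (a t) ^ 2 + (b t) ^ 2) ≤ -(Real.sqrt K₀ / 3)) :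
    ∀ t : ℝ, 0 ≤ t →
      Real.exp (2 * ((Real.sqrt K₀ / 3) * (1 + (1 / K₁) * K₀)) * t) *
          ((1 / K₁) * (a 0) ^ 2 + (b 0) ^ 2)
        ≤ (1 / K₁) * (a t) ^ 2 + (b t) ^ 2 := by
  intro t ht
  have hK₁ : 0 < K₁ := lt_of_lt_of_le hK₀ hK₀₁
  set ζ : ℝ := 1 / K₁ with hζdef
  have hζpos : 0 < ζ := by positivity
  set γ : ℝ := Real.sqrt K₀ / 3 with hγdef
  have hγpos : 0 < γ := by
    have : 0 < Real.sqrt K₀ := Real.sqrt_pos.2 hK₀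
    positivity
  set ν : ℝ := γ * (1 + ζ * K₀) with hνdef
  have hνpos : 0 < ν := by positivity
  set R : ℝ → ℝ := fun s => ζ * (a s) ^ 2 + (b s) ^ 2 with hRdef
  have hRpos : ∀ s : ℝ, 0 ≤ s → 0 < R s := by
    intro s hs
    have h := hnz s hs
    have hab : a s ≠ 0 ∨ b s ≠ 0 := by
      by_contra hc
      push_neg at hc
      exact h (by simp [hc.1, hc.2])
    show 0 < ζ * (a s) ^ 2 + (b s) ^ 2
    rcases hab with h1 | h1
    · have : 0 < (a s) ^ 2 := by positivity
      nlinarith [sq_nonneg (b s)]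
    · have : 0 < (b s) ^ 2 := by positivity
      nlinarith [sq_nonneg (a s), mul_nonneg hζpos.le (sq_nonneg (a s))]
  -- derivative of R
  have hRderiv : ∀ s : ℝ, 0 ≤ s →
      HasDerivAt R (2 * (a s * b s) * (ζ * Kc s - 1)) s := by
    intro s hs
    have h1 : HasDerivAt (fun u => ζ * (a u) ^ 2)
        (ζ * (2 * a s ^ 1 * (Kc s * b s))) s := ((ha s hs).pow 2).const_mul ζ
    have h2 : HasDerivAt (fun u => (b u) ^ 2)
        (2 * b s ^ 1 * (-(a s))) s := (hb s hs).pow 2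
    have := h1.add h2
    refine this.congr_deriv ?_
    ring
  -- key inequality: R' ≥ 2νR
  have hkey : ∀ s : ℝ, 0 ≤ s → 2 * ν * R s ≤ 2 * (a s * b s) * (ζ * Kc s - 1) := by
    intro s hs
    have hRp := hRpos s hs
    have hab : a s * b s ≤ -γ * R s := by
      have h := hcone s hs
      rw [div_le_iff₀ hRp] at h
      linarith [h]
    have hu : 1 + ζ * K₀ ≤ 1 - ζ * Kc s := by
      have h2 := (hKbound s hs).2
      nlinarith [mul_le_mul_of_nonneg_left h2 hζpos.le]
    have hupos : 0 < 1 + ζ * K₀ := by positivity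
    have hγR : 0 < γ * R s := mul_pos hγpos hRp
    nlinarith [mul_nonneg (sub_nonneg.2 hu) (by nlinarith : (0:ℝ) ≤ -(a s * b s) - γ * R s),
      mul_nonneg (sub_nonneg.2 hu) hγR.le,
      mul_le_mul_of_nonneg_left hab hupos.le]
  -- the auxiliary function f = exp(-2νs) R s is monotone on [0, ∞)
  set f : ℝ → ℝ := fun s => Real.exp (-(2 * ν) * s) * R s with hfdef
  have hfderiv : ∀ s : ℝ, 0 ≤ s →
      HasDerivAt f (Real.exp (-(2 * ν) * s) * (2 * (a s * b s) * (ζ * Kc s - 1))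
        + (Real.exp (-(2 * ν) * s) * (-(2 * ν))) * R s) s := by
    intro s hs
    have hE : HasDerivAt (fun u => Real.exp (-(2 * ν) * u))
        (Real.exp (-(2 * ν) * s) * (-(2 * ν))) s := by
      have h0 : HasDerivAt (fun u : ℝ => -(2 * ν) * u) (-(2 * ν)) s := by
        simpa using (hasDerivAt_id s).const_mul (-(2 * ν))
      exact h0.exp
    have := hE.mul (hRderiv s hs)
    refine this.congr_deriv ?_
    ring
  have hmono : MonotoneOn f (Ici (0:ℝ)) := by
    apply monotoneOn_of_deriv_nonneg (convex_Ici 0)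
    · exact fun s hs => (hfderiv s hs).continuousAt.continuousWithinAt
    · intro s hs
      rw [interior_Ici] at hs
      exact (hfderiv s (le_of_lt hs)).differentiableAt.differentiableWithinAt
    · intro s hs
      rw [interior_Ici] at hs
      rw [(hfderiv s (le_of_lt hs)).deriv]
      have hkey' := hkey s (le_of_lt hs)
      have hEp : 0 < Real.exp (-(2 * ν) * s) := Real.exp_pos _
      nlinarith [mul_le_mul_of_nonneg_left hkey' hEp.le]
  have hft : f 0 ≤ f t := hmono (self_mem_Ici) ht ht
  have hf0 : f 0 = R 0 := by simp [hfdef]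
  have hexp : Real.exp (2 * ν * t) * Real.exp (-(2 * ν) * t) = 1 := by
    rw [← Real.exp_add]; ring_nf; exact Real.exp_zero
  have hEp : 0 < Real.exp (2 * ν * t) := Real.exp_pos _
  have hfinal : Real.exp (2 * ν * t) * R 0 ≤ R t := by
    have := mul_le_mul_of_nonneg_left hft hEp.le
    rw [hf0] at this
    calc Real.exp (2 * ν * t) * R 0 ≤ Real.exp (2 * ν * t) * (Real.exp (-(2 * ν) * t) * R t) := this
    _ = (Real.exp (2 * ν * t) * Real.exp (-(2 * ν) * t)) * R t := by ring
    _ = R t := by rw [hexp, one_mul]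
  simpa [hRdef, hνdef, hγdef, hζdef] using hfinal
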